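/- Let T_k = ∑_{a+b=k} a! b! ch_a ch_b(td_S) be the multiplication operator on the descendent algebra of a surface with a fixed Künneth decomposition, and let R_{−k} (k ≥ 2) be the derivation with R_{−k}(ch_i(γ)) = ((i−k)!/(i−1)!) ch_{i−k}(γ) for i ≥ k, else 0, extended so that R_{−k} of a product of two generators ch_i(γ^L) ch_j(γ^R) obeys the Leibniz rule. Then R_{−k} T_l = (l+k) T_{l−k} when l ≥ k, and R_{−k} T_l = 0 when l < k, where T_{l−k} is the analogous multiplication element and the convention ch_{<0} = 0 is used. -/

import Mathlib

lemma fact_pred (m : ℕ) (hm : 1 ≤ m) :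
    ((m.factorial : ℚ)) = (m : ℚ) * (((m - 1).factorial : ℚ)) := by
  obtain ⟨m, rfl⟩ := Nat.exists_eq_add_of_le hm
  rw [Nat.add_comm]
  simp [Nat.factorial_succ]

theorem stmt_10 (A : Type*) [CommRing A] [Algebra ℚ A]
    (H : Type*) [AddCommGroup H] [Module ℚ H]
    (ch : ℕ → H →ₗ[ℚ] A)
    (n : ℕ) (ε : Fin n → ℚ) (γL γR : Fin n → H)
    (R : ℕ → Derivation ℚ A A)
    (hR : ∀ k : ℕ, 2 ≤ k → ∀ (i : ℕ) (γ : H),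
      R k (ch i γ) =
        (if k ≤ i then ((i - k).factorial : ℚ) / ((i - 1).factorial : ℚ) else 0) •
          ch (i - k) γ)
    (T : ℕ → A)
    (hT : ∀ l : ℕ, T l = ∑ i ∈ Finset.range (l + 1), ∑ t : Fin n,
      (ε t * (i.factorial : ℚ) * ((l - i).factorial : ℚ)) • (ch i (γL t) * ch (l - i) (γR t)))
    (k l : ℕ) (hk : 2 ≤ k) :
    (k ≤ l → R k (T l) = ((l : ℚ) + (k : ℚ)) • T (l - k)) ∧
    (l < k → R k (T l) = 0) := by
  have key : ∀ (i j : ℕ) (c : ℚ) (x y : H),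
      R k (c • (ch i x * ch j y)) =
        ((if k ≤ i then c * (((i-k).factorial : ℚ) / ((i-1).factorial : ℚ)) else 0)
          • (ch (i-k) x * ch j y))
        + ((if k ≤ j then c * (((j-k).factorial : ℚ) / ((j-1).factorial : ℚ)) else 0)
          • (ch i x * ch (j-k) y)) := by
    intro i j c x y
    rw [Derivation.map_smul, Derivation.leibniz, hR k hk, hR k hk]
    by_cases h1 : k ≤ i <;> by_cases h2 : k ≤ j <;>
      simp [h1, h2, smul_add, smul_smul, smul_eq_mul, Algebra.smul_def] <;> ring
  constructor
  · intro hkl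
    rw [hT l, map_sum]
    have expand : ∀ i ∈ Finset.range (l + 1),
        R k (∑ t : Fin n, (ε t * (i.factorial : ℚ) * ((l - i).factorial : ℚ)) •
            (ch i (γL t) * ch (l - i) (γR t))) =
        (∑ t : Fin n,
          (if k ≤ i then (ε t * (i.factorial : ℚ) * ((l - i).factorial : ℚ)) *
              (((i-k).factorial : ℚ) / ((i-1).factorial : ℚ)) else 0)
            • (ch (i-k) (γL t) * ch (l-i) (γR t))) +
        (∑ t : Fin n,
          (if k ≤ l - i then (ε t * (i.factorial : ℚ) * ((l - i).factorial : ℚ)) *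
              (((l-i-k).factorial : ℚ) / ((l-i-1).factorial : ℚ)) else 0)
            • (ch i (γL t) * ch (l-i-k) (γR t))) := by
      intro i _
      rw [map_sum, ← Finset.sum_add_distrib]
      exact Finset.sum_congr rfl fun t _ => key i (l - i) _ _ _
    rw [Finset.sum_congr rfl expand, Finset.sum_add_distrib]
    -- first sum: reindex i ↦ k + i
    have hS1 : (∑ i ∈ Finset.range (l + 1), ∑ t : Fin n,
          (if k ≤ i then (ε t * (i.factorial : ℚ) * ((l - i).factorial : ℚ)) *
              (((i-k).factorial : ℚ) / ((i-1).factorial : ℚ)) else 0)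
            • (ch (i-k) (γL t) * ch (l-i) (γR t))) =
        ∑ i ∈ Finset.range (l - k + 1), ∑ t : Fin n,
          (ε t * (((k + i : ℕ) : ℚ)) * (i.factorial : ℚ) * ((l - k - i).factorial : ℚ))
            • (ch i (γL t) * ch (l - k - i) (γR t)) := by
      conv_lhs => rw [Finset.range_eq_Ico,
        ← Finset.sum_Ico_consecutive _ (Nat.zero_le k) (by omega : k ≤ l + 1)]
      have hz : (∑ i ∈ Finset.Ico 0 k, ∑ t : Fin n,
          (if k ≤ i then (ε t * (i.factorial : ℚ) * ((l - i).factorial : ℚ)) *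
              (((i-k).factorial : ℚ) / ((i-1).factorial : ℚ)) else 0)
            • (ch (i-k) (γL t) * ch (l-i) (γR t))) = 0 := by
        refine Finset.sum_eq_zero fun i hi => Finset.sum_eq_zero fun t _ => ?_
        rw [Finset.mem_Ico] at hi
        rw [if_neg (by omega), zero_smul]
      rw [hz, zero_add, Finset.sum_Ico_eq_sum_range]
      rw [show l + 1 - k = l - k + 1 from by omega]
      refine Finset.sum_congr rfl fun i hi => Finset.sum_congr rfl fun t _ => ?_
      rw [Finset.mem_range] at hi
      have e1 : k + i - k = i := by omega
      have e2 : l - (k + i) = l - k - i := by omega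
      rw [if_pos (Nat.le_add_right k i), e1, e2]
      congr 1
      rw [fact_pred (k + i) (by omega)]
      have h0 : (((k + i - 1).factorial : ℚ)) ≠ 0 := by
        exact_mod_cast (Nat.factorial_pos _).ne'
      field_simp
    -- second sum: truncate to range (l - k + 1)
    have hS2 : (∑ i ∈ Finset.range (l + 1), ∑ t : Fin n,
          (if k ≤ l - i then (ε t * (i.factorial : ℚ) * ((l - i).factorial : ℚ)) *
              (((l-i-k).factorial : ℚ) / ((l-i-1).factorial : ℚ)) else 0)
            • (ch i (γL t) * ch (l-i-k) (γR t))) =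
        ∑ i ∈ Finset.range (l - k + 1), ∑ t : Fin n,
          (ε t * (((l - i : ℕ) : ℚ)) * (i.factorial : ℚ) * ((l - k - i).factorial : ℚ))
            • (ch i (γL t) * ch (l - k - i) (γR t)) := by
      rw [← Finset.sum_subset (Finset.range_subset_range.mpr (by omega : l - k + 1 ≤ l + 1))]
      · refine Finset.sum_congr rfl fun i hi => Finset.sum_congr rfl fun t _ => ?_
        rw [Finset.mem_range] at hi
        have e1 : l - i - k = l - k - i := by omega
        rw [if_pos (by omega : k ≤ l - i), e1]
        congr 1
        rw [fact_pred (l - i) (by omega)]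
        have h0 : (((l - i - 1).factorial : ℚ)) ≠ 0 := by
          exact_mod_cast (Nat.factorial_pos _).ne'
        field_simp
      · intro i hi hni
        rw [Finset.mem_range] at hi
        rw [Finset.mem_range] at hni
        refine Finset.sum_eq_zero fun t _ => ?_
        rw [if_neg (by omega), zero_smul]
    rw [hS1, hS2, ← Finset.sum_add_distrib, hT (l - k), Finset.smul_sum]
    refine Finset.sum_congr rfl fun i hi => ?_
    rw [Finset.smul_sum, ← Finset.sum_add_distrib]
    refine Finset.sum_congr rfl fun t _ => ?_
    rw [Finset.mem_range] at hi
    rw [← add_smul, smul_smul]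
    congr 1
    rw [Nat.cast_sub (by omega : i ≤ l)]
    push_cast
    ring
  · intro hlk
    rw [hT l, map_sum]
    refine Finset.sum_eq_zero fun i hi => ?_
    rw [map_sum]
    refine Finset.sum_eq_zero fun t _ => ?_
    rw [Finset.mem_range] at hi
    rw [key]
    rw [if_neg (by omega), if_neg (by omega), zero_smul, zero_smul, add_zero]
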